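/- Let (uₙ) be a sequence in a Hilbert space with ‖uₙ‖ ≤ 1 for all n. For h ∈ ℕ set γ_h = limsup_{N→∞} |(1/N) ∑_{n=0}^{N-1} ⟨u_{n+h}, uₙ⟩|. Then limsup_{N→∞} ‖(1/N) ∑_{n=0}^{N-1} uₙ‖² ≤ limsup_{H→∞} (1/H) ∑_{h=0}^{H-1} γ_h. -/

import Mathlib

open Filter Finset

lemma vdc_shift {F : Type*} [SeminormedAddCommGroup F] (a : ℕ → F)
    (ha : ∀ k, ‖a k‖ ≤ 1) (m N : ℕ) :
    ‖(∑ n ∈ range N, a (n + m)) - ∑ n ∈ range N, a n‖ ≤ 2 * m := by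
  have h1 : ∑ n ∈ range N, a (n + m) = ∑ k ∈ Ico m (N + m), a k := by
    rw [Finset.sum_Ico_eq_sum_range]
    simp [add_comm, Nat.add_sub_cancel]
  have e1 : ∑ k ∈ Ico 0 (N + m), a k
      = (∑ k ∈ Ico 0 m, a k) + ∑ k ∈ Ico m (N + m), a k :=
    (Finset.sum_Ico_consecutive _ (Nat.zero_le m) (Nat.le_add_left m N)).symm
  have e2 : ∑ k ∈ Ico 0 (N + m), a k
      = (∑ k ∈ Ico 0 N, a k) + ∑ k ∈ Ico N (N + m), a k :=
    (Finset.sum_Ico_consecutive _ (Nat.zero_le N) (Nat.le_add_right N m)).symm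
  have key : (∑ n ∈ range N, a (n + m)) - ∑ n ∈ range N, a n
      = (∑ k ∈ Ico N (N + m), a k) - ∑ k ∈ Ico 0 m, a k := by
    rw [h1, Finset.range_eq_Ico]
    have := e1.symm.trans e2
    abel_nf
    abel_nf at this
    linear_combination (norm := abel) this
  rw [key]
  have b1 : ‖∑ k ∈ Ico N (N + m), a k‖ ≤ m := by
    calc ‖∑ k ∈ Ico N (N + m), a k‖ ≤ ∑ k ∈ Ico N (N + m), ‖a k‖ := norm_sum_le _ _
    _ ≤ ∑ k ∈ Ico N (N + m), 1 := Finset.sum_le_sum fun k _ => ha k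
    _ = m := by simp
  have b2 : ‖∑ k ∈ Ico 0 m, a k‖ ≤ m := by
    calc ‖∑ k ∈ Ico 0 m, a k‖ ≤ ∑ k ∈ Ico 0 m, ‖a k‖ := norm_sum_le _ _
    _ ≤ ∑ k ∈ Ico 0 m, 1 := Finset.sum_le_sum fun k _ => ha k
    _ = m := by simp
  calc ‖(∑ k ∈ Ico N (N + m), a k) - ∑ k ∈ Ico 0 m, a k‖
      ≤ ‖∑ k ∈ Ico N (N + m), a k‖ + ‖∑ k ∈ Ico 0 m, a k‖ := norm_sub_le _ _
  _ ≤ m + m := add_le_add b1 b2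
  _ = 2 * m := by ring

lemma vdc_inner_bd {E : Type*} [NormedAddCommGroup E] [InnerProductSpace ℂ E]
    (u : ℕ → E) (hu : ∀ n, ‖u n‖ ≤ 1) (k d : ℕ) :
    ‖(inner ℂ (u (k + d)) (u k) : ℂ)‖ ≤ 1 := by
  calc ‖(inner ℂ (u (k + d)) (u k) : ℂ)‖ ≤ ‖u (k + d)‖ * ‖u k‖ := norm_inner_le_norm _ _
  _ ≤ 1 * 1 := mul_le_mul (hu _) (hu _) (norm_nonneg _) zero_le_one
  _ = 1 := one_mul 1

lemma vdc_pair_le {E : Type*} [NormedAddCommGroup E] [InnerProductSpace ℂ E]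
    (u : ℕ → E) (hu : ∀ n, ‖u n‖ ≤ 1) {h h' : ℕ} (hle : h' ≤ h) (N : ℕ) :
    ‖∑ n ∈ range N, (inner ℂ (u (n + h)) (u (n + h')) : ℂ)‖ ≤
      ‖∑ n ∈ range N, (inner ℂ (u (n + (h - h'))) (u n) : ℂ)‖ + 2 * h' := by
  set a : ℕ → ℂ := fun k => (inner ℂ (u (k + (h - h'))) (u k) : ℂ) with ha
  have ha1 : ∀ k, ‖a k‖ ≤ 1 := fun k => vdc_inner_bd u hu k _
  have hrw : ∀ n, (inner ℂ (u (n + h)) (u (n + h')) : ℂ) = a (n + h') := by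
    intro n
    simp only [ha]
    congr 2
    omega
  have := vdc_shift a ha1 h' N
  calc ‖∑ n ∈ range N, (inner ℂ (u (n + h)) (u (n + h')) : ℂ)‖
      = ‖∑ n ∈ range N, a (n + h')‖ := by simp_rw [hrw]
  _ ≤ ‖∑ n ∈ range N, a n‖ + 2 * h' := by
      have h2 := norm_sub_norm_le (∑ n ∈ range N, a (n + h')) (∑ n ∈ range N, a n)
      linarith [h2.trans this]
  _ = _ := rfl

lemma vdc_pair {E : Type*} [NormedAddCommGroup E] [InnerProductSpace ℂ E]
    (u : ℕ → E) (hu : ∀ n, ‖u n‖ ≤ 1) (h h' N H : ℕ) (hh : h < H) (hh' : h' < H) :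
    ‖∑ n ∈ range N, (inner ℂ (u (n + h)) (u (n + h')) : ℂ)‖ ≤
      ‖∑ n ∈ range N, (inner ℂ (u (n + Nat.dist h h')) (u n) : ℂ)‖ + 2 * H := by
  rcases le_total h' h with hle | hle
  · have := vdc_pair_le u hu hle N
    have hd : Nat.dist h h' = h - h' := Nat.dist_eq_sub_of_le_right hle
    rw [hd]
    have : (2:ℝ) * h' ≤ 2 * H := by
      have : (h':ℝ) ≤ H := by exact_mod_cast hh'.le
      linarith
    linarith [vdc_pair_le u hu hle N]
  · have key := vdc_pair_le u hu hle N
    have hd : Nat.dist h h' = h' - h := Nat.dist_eq_sub_of_le hle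
    have hconj : ‖∑ n ∈ range N, (inner ℂ (u (n + h)) (u (n + h')) : ℂ)‖
        = ‖∑ n ∈ range N, (inner ℂ (u (n + h')) (u (n + h)) : ℂ)‖ := by
      rw [show (∑ n ∈ range N, (inner ℂ (u (n + h)) (u (n + h')) : ℂ))
          = (starRingEnd ℂ) (∑ n ∈ range N, (inner ℂ (u (n + h')) (u (n + h)) : ℂ)) by
        rw [map_sum]; exact Finset.sum_congr rfl fun n _ => (inner_conj_symm _ _).symm]
      exact RCLike.norm_conj _
    rw [hconj, hd]
    have : (2:ℝ) * h ≤ 2 * H := by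
      have : (h:ℝ) ≤ H := by exact_mod_cast hh.le
      linarith
    linarith

lemma vdc_gamma_sum (γ : ℕ → ℝ) (hpos : ∀ d, 0 ≤ γ d) (H : ℕ) :
    ∑ h ∈ range H, ∑ h' ∈ range H, γ (Nat.dist h h') ≤
      2 * ∑ k ∈ range H, ∑ d ∈ range (k + 1), γ d := by
  set S : ℕ → ℝ := fun k => ∑ d ∈ range k, γ d with hS
  have hinner : ∀ h ∈ range H, ∑ h' ∈ range H, γ (Nat.dist h h') ≤ S (h + 1) + S (H - h) := by
    intro h hh
    rw [mem_range] at hh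
    have hsplit : ∑ h' ∈ range H, γ (Nat.dist h h')
        = (∑ h' ∈ range h, γ (Nat.dist h h')) + ∑ h' ∈ Ico h H, γ (Nat.dist h h') := by
      rw [range_eq_Ico, ← Finset.sum_Ico_consecutive _ (Nat.zero_le h) hh.le, range_eq_Ico]
    have p1 : ∑ h' ∈ range h, γ (Nat.dist h h') ≤ S (h + 1) := by
      have e : ∑ h' ∈ range h, γ (Nat.dist h h') = ∑ j ∈ range h, γ (j + 1) := by
        rw [← Finset.sum_range_reflect (fun j => γ (j + 1)) h]
        refine Finset.sum_congr rfl fun h' hh' => ?_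
        rw [mem_range] at hh'
        congr 1
        rw [Nat.dist_eq_sub_of_le_right hh'.le]
        omega
      rw [e, hS]
      have : ∑ j ∈ range (h + 1), γ j = (∑ j ∈ range h, γ (j + 1)) + γ 0 :=
        Finset.sum_range_succ' γ h
      simp only
      linarith [hpos 0]
    have p2 : ∑ h' ∈ Ico h H, γ (Nat.dist h h') = S (H - h) := by
      rw [Finset.sum_Ico_eq_sum_range]
      refine Finset.sum_congr rfl fun j _ => ?_
      congr 1
      rw [Nat.dist_eq_sub_of_le (Nat.le_add_right h j)]
      omega
    rw [hsplit, p2]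
    linarith
  calc ∑ h ∈ range H, ∑ h' ∈ range H, γ (Nat.dist h h')
      ≤ ∑ h ∈ range H, (S (h + 1) + S (H - h)) := Finset.sum_le_sum hinner
  _ = (∑ h ∈ range H, S (h + 1)) + ∑ h ∈ range H, S (H - h) := Finset.sum_add_distrib
  _ = 2 * ∑ k ∈ range H, S (k + 1) := by
      have : ∑ h ∈ range H, S (H - h) = ∑ h ∈ range H, S (h + 1) := by
        rw [← Finset.sum_range_reflect (fun j => S (j + 1)) H]
        refine Finset.sum_congr rfl fun h hh => ?_
        rw [mem_range] at hh
        congr 1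
        omega
      rw [this]; ring

set_option maxHeartbeats 2000000 in
/-- The van der Corput lemma: for a sequence `(uₙ)` of vectors of norm at most
`1` in a Hilbert space, with `γ h = limsup_N |(1/N) ∑_{n<N} ⟨u_{n+h}, uₙ⟩|`,
the limsup of `‖(1/N) ∑_{n<N} uₙ‖²` is at most `limsup_H (1/H) ∑_{h<H} γ h`. -/
theorem van_der_corput
    {E : Type*} [NormedAddCommGroup E] [InnerProductSpace ℂ E]
    (u : ℕ → E) (hu : ∀ n, ‖u n‖ ≤ 1)
    (γ : ℕ → ℝ)
    (hγ : ∀ h : ℕ, γ h =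
      limsup (fun N : ℕ =>
        ‖(N : ℂ)⁻¹ * ∑ n ∈ range N, (inner ℂ (u (n + h)) (u n) : ℂ)‖)
        atTop) :
    limsup (fun N : ℕ => ‖(N : ℝ)⁻¹ • ∑ n ∈ range N, u n‖ ^ 2) atTop ≤
      limsup (fun H : ℕ => (H : ℝ)⁻¹ * ∑ h ∈ range H, γ h) atTop := by
  -- the averaged correlation sequence
  set c : ℕ → ℕ → ℝ := fun d N =>
    ‖(N : ℂ)⁻¹ * ∑ n ∈ range N, (inner ℂ (u (n + d)) (u n) : ℂ)‖ with hc
  have hc0 : ∀ d N, 0 ≤ c d N := fun d N => norm_nonneg _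
  have hc1 : ∀ d N, c d N ≤ 1 := by
    intro d N
    rcases Nat.eq_zero_or_pos N with rfl | hN
    · simp [hc]
    · have : c d N = (N : ℝ)⁻¹ * ‖∑ n ∈ range N, (inner ℂ (u (n + d)) (u n) : ℂ)‖ := by
        simp [hc, norm_mul, norm_inv, Complex.norm_natCast]
      rw [this]
      have hb : ‖∑ n ∈ range N, (inner ℂ (u (n + d)) (u n) : ℂ)‖ ≤ N := by
        calc ‖∑ n ∈ range N, (inner ℂ (u (n + d)) (u n) : ℂ)‖
            ≤ ∑ n ∈ range N, ‖(inner ℂ (u (n + d)) (u n) : ℂ)‖ := by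
              exact norm_sum_le _ _
        _ ≤ ∑ n ∈ range N, 1 := Finset.sum_le_sum fun n _ => vdc_inner_bd u hu n d
        _ = N := by simp
      calc (N : ℝ)⁻¹ * ‖∑ n ∈ range N, (inner ℂ (u (n + d)) (u n) : ℂ)‖
          ≤ (N : ℝ)⁻¹ * N := by
            apply mul_le_mul_of_nonneg_left hb
            positivity
      _ = 1 := by
            field_simp
  have hγ' : ∀ d, γ d = limsup (c d) atTop := hγ
  have hγ0 : ∀ d, 0 ≤ γ d := by
    intro d
    rw [hγ' d]
    exact le_limsup_of_frequently_le
      (Frequently.of_forall fun N => hc0 d N)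
      (isBoundedUnder_of ⟨1, fun N => hc1 d N⟩)
  have hγ1 : ∀ d, γ d ≤ 1 := by
    intro d
    rw [hγ' d]
    exact limsup_le_of_le
      (isCoboundedUnder_le_of_le atTop fun N => hc0 d N)
      (Eventually.of_forall fun N => hc1 d N)
  -- the right-hand side
  set L : ℝ := limsup (fun H : ℕ => (H : ℝ)⁻¹ * ∑ h ∈ range H, γ h) atTop with hL
  set R : ℕ → ℝ := fun H => (H : ℝ)⁻¹ * ∑ h ∈ range H, γ h with hR
  have hR0 : ∀ H, 0 ≤ R H := by
    intro H
    apply mul_nonneg (by positivity)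
    exact Finset.sum_nonneg fun d _ => hγ0 d
  have hR1 : ∀ H, R H ≤ 1 := by
    intro H
    rcases Nat.eq_zero_or_pos H with rfl | hH
    · simp [hR]
    · rw [hR]
      calc (H : ℝ)⁻¹ * ∑ h ∈ range H, γ h ≤ (H : ℝ)⁻¹ * H := by
            apply mul_le_mul_of_nonneg_left _ (by positivity)
            calc ∑ h ∈ range H, γ h ≤ ∑ h ∈ range H, 1 := Finset.sum_le_sum fun d _ => hγ1 d
            _ = H := by simp
      _ = 1 := by field_simp
  have hL0 : 0 ≤ L := le_limsup_of_frequently_le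
      (Frequently.of_forall fun H => hR0 H)
      (isBoundedUnder_of ⟨1, fun H => hR1 H⟩)
  have hcdef : ∀ d N, c d N =
      ‖(N : ℂ)⁻¹ * ∑ n ∈ range N, (inner ℂ (u (n + d)) (u n) : ℂ)‖ :=
    fun d N => by rw [hc]
  have hRdef : ∀ H : ℕ, R H = (H : ℝ)⁻¹ * ∑ h ∈ range H, γ h := fun H => by rw [hR]
  have hL1 : L ≤ 1 := by
    rw [hL]
    exact limsup_le_of_le
      (isCoboundedUnder_le_of_le atTop fun H => hR0 H)
      (Eventually.of_forall fun H => hR1 H)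
  have hLdef : L = limsup R atTop := hL
  -- main per-H bound
  have stepD : ∀ H : ℕ, 1 ≤ H →
      limsup (fun N : ℕ => ‖(N : ℝ)⁻¹ • ∑ n ∈ range N, u n‖ ^ 2) atTop ≤
        ((H : ℝ)⁻¹) ^ 2 * ∑ h ∈ range H, ∑ h' ∈ range H, γ (Nat.dist h h') := by
    intro H hH
    set Hr : ℝ := (H : ℝ) with hHr
    have hHrpos : 0 < Hr := by rw [hHr]; exact_mod_cast hH
    set Tγ : ℝ := ∑ h ∈ range H, ∑ h' ∈ range H, γ (Nat.dist h h') with hTγ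
    apply le_of_forall_pos_le_add
    intro δ hδ
    apply limsup_le_of_le
    · exact isCoboundedUnder_le_of_le atTop fun N => by positivity
    -- eventual facts
    have hF1 : ∀ᶠ N in atTop, ∀ d ∈ range H, c d N < γ d + δ / 2 := by
      rw [eventually_all_finset]
      intro d _
      apply eventually_lt_of_limsup_lt
      · rw [← hγ' d]; linarith
      · exact isBoundedUnder_of ⟨1, fun N => hc1 d N⟩
    obtain ⟨N₀, hN₀⟩ := exists_nat_ge (max (2 * Hr) (16 * Hr / δ))
    filter_upwards [hF1, eventually_ge_atTop N₀, eventually_ge_atTop 1] with N hN1 hNN₀ hNone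
    set Nr : ℝ := (N : ℝ) with hNrdef
    have hNrpos : 0 < Nr := by rw [hNrdef]; exact_mod_cast hNone
    have hNrbig : max (2 * Hr) (16 * Hr / δ) ≤ Nr := by
      refine hN₀.trans ?_
      rw [hNrdef]
      exact_mod_cast hNN₀
    set e : ℝ := 2 * Hr / Nr with hedef
    have he0 : 0 ≤ e := by positivity
    have he1 : e ≤ 1 := by
      rw [hedef, div_le_one hNrpos]
      calc 2 * Hr ≤ max (2 * Hr) (16 * Hr / δ) := le_max_left _ _
      _ ≤ Nr := hNrbig
    have he2 : e ≤ δ / 8 := by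
      rw [hedef, div_le_iff₀ hNrpos]
      have h16 : 16 * Hr / δ ≤ Nr := (le_max_right _ _).trans hNrbig
      rw [div_le_iff₀ hδ] at h16
      linarith
    -- the vectors
    set A : E := ∑ n ∈ range N, u n with hA
    set v : ℕ → E := fun n => ∑ h ∈ range H, u (n + h) with hv
    set W : E := ∑ n ∈ range N, v n with hW
    -- (a) comparison of A and W
    have ha : ‖Hr • A - W‖ ≤ 2 * Hr ^ 2 := by
      have h1 : Hr • A - W = ∑ h ∈ range H, ((∑ n ∈ range N, u n) - ∑ n ∈ range N, u (n + h)) := by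
        rw [Finset.sum_sub_distrib, hW, hv, hA]
        rw [Finset.sum_comm (s := range N) (t := range H) (f := fun n h => u (n + h))]
        congr 1
        rw [Finset.sum_const, card_range, hHr, Nat.cast_smul_eq_nsmul]
      rw [h1]
      calc ‖∑ h ∈ range H, ((∑ n ∈ range N, u n) - ∑ n ∈ range N, u (n + h))‖
          ≤ ∑ h ∈ range H, ‖(∑ n ∈ range N, u n) - ∑ n ∈ range N, u (n + h)‖ := norm_sum_le _ _
      _ ≤ ∑ h ∈ range H, 2 * Hr := by
          apply Finset.sum_le_sum
          intro h hh
          rw [mem_range] at hh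
          rw [norm_sub_rev]
          refine (vdc_shift u hu h N).trans ?_
          have : (h : ℝ) ≤ Hr := by rw [hHr]; exact_mod_cast hh.le
          linarith
      _ = 2 * Hr ^ 2 := by rw [Finset.sum_const, card_range, nsmul_eq_mul]; ring
    -- (b) bounds on v
    have hvb : ∀ n, ‖v n‖ ≤ Hr := by
      intro n
      calc ‖v n‖ ≤ ∑ h ∈ range H, ‖u (n + h)‖ := norm_sum_le _ _
      _ ≤ ∑ h ∈ range H, 1 := Finset.sum_le_sum fun h _ => hu _
      _ = Hr := by simp [hHr]
    -- (c) expansion of ∑ ‖v n‖²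
    have hcexp : ∑ n ∈ range N, ‖v n‖ ^ 2 ≤
        ∑ h ∈ range H, ∑ h' ∈ range H,
          ‖∑ n ∈ range N, (inner ℂ (u (n + h)) (u (n + h')) : ℂ)‖ := by
      have hvn : ∀ n, ‖v n‖ ^ 2
          = ∑ h ∈ range H, ∑ h' ∈ range H, ((inner ℂ (u (n + h)) (u (n + h')) : ℂ)).re := by
        intro n
        have h1 : ‖v n‖ ^ 2 = ((inner ℂ (v n) (v n) : ℂ)).re := by
          rw [← @inner_self_eq_norm_sq ℂ]
          simp
        rw [h1, hv]
        simp only [sum_inner, inner_sum, Complex.re_sum]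
        exact Finset.sum_comm
      calc ∑ n ∈ range N, ‖v n‖ ^ 2
          = ∑ n ∈ range N, ∑ h ∈ range H, ∑ h' ∈ range H,
              ((inner ℂ (u (n + h)) (u (n + h')) : ℂ)).re := by
            exact Finset.sum_congr rfl fun n _ => hvn n
      _ = ∑ h ∈ range H, ∑ h' ∈ range H, ∑ n ∈ range N,
              ((inner ℂ (u (n + h)) (u (n + h')) : ℂ)).re := by
            rw [Finset.sum_comm]
            exact Finset.sum_congr rfl fun h _ => Finset.sum_comm
      _ ≤ ∑ h ∈ range H, ∑ h' ∈ range H,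
            ‖∑ n ∈ range N, (inner ℂ (u (n + h)) (u (n + h')) : ℂ)‖ := by
            apply Finset.sum_le_sum
            intro h _
            apply Finset.sum_le_sum
            intro h' _
            rw [← Complex.re_sum]
            exact Complex.re_le_norm _
    -- (d) per-pair bound
    have hd : ∀ h ∈ range H, ∀ h' ∈ range H,
        ‖∑ n ∈ range N, (inner ℂ (u (n + h)) (u (n + h')) : ℂ)‖ ≤
          Nr * (γ (Nat.dist h h') + δ / 2) + 2 * Hr := by
      intro h hh h' hh'
      rw [mem_range] at hh hh'
      have hdist : Nat.dist h h' ∈ range H := by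
        rw [mem_range]
        rcases le_total h' h with hle | hle
        · rw [Nat.dist_eq_sub_of_le_right hle]; omega
        · rw [Nat.dist_eq_sub_of_le hle]; omega
      have hcval : ‖∑ n ∈ range N, (inner ℂ (u (n + Nat.dist h h')) (u n) : ℂ)‖
          = Nr * c (Nat.dist h h') N := by
        rw [hcdef _ _ , norm_mul, norm_inv, Complex.norm_natCast]
        field_simp
        rfl
      have h2 : Nr * c (Nat.dist h h') N ≤ Nr * (γ (Nat.dist h h') + δ / 2) :=
        mul_le_mul_of_nonneg_left (hN1 _ hdist).le hNrpos.le
      calc ‖∑ n ∈ range N, (inner ℂ (u (n + h)) (u (n + h')) : ℂ)‖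
          ≤ ‖∑ n ∈ range N, (inner ℂ (u (n + Nat.dist h h')) (u n) : ℂ)‖ + 2 * H :=
            vdc_pair u hu h h' N H hh hh'
      _ = Nr * c (Nat.dist h h') N + 2 * Hr := by rw [hcval, hHr]
      _ ≤ Nr * (γ (Nat.dist h h') + δ / 2) + 2 * Hr := by linarith
    -- (e) bound on ‖W‖²
    have hW2 : ‖W‖ ^ 2 ≤ Nr * (Nr * Tγ + Nr * (δ / 2) * Hr ^ 2 + 2 * Hr ^ 3) := by
      have hWn : ‖W‖ ≤ ∑ n ∈ range N, ‖v n‖ := norm_sum_le _ _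
      have hsq : (∑ n ∈ range N, ‖v n‖) ^ 2 ≤ N * ∑ n ∈ range N, ‖v n‖ ^ 2 := by
        have := sq_sum_le_card_mul_sum_sq (s := range N) (f := fun n => ‖v n‖)
        simpa using this
      have hsum2 : ∑ n ∈ range N, ‖v n‖ ^ 2 ≤ Nr * Tγ + Nr * (δ / 2) * Hr ^ 2 + 2 * Hr ^ 3 := by
        refine hcexp.trans ?_
        calc ∑ h ∈ range H, ∑ h' ∈ range H,
              ‖∑ n ∈ range N, (inner ℂ (u (n + h)) (u (n + h')) : ℂ)‖
            ≤ ∑ h ∈ range H, ∑ h' ∈ range H, (Nr * (γ (Nat.dist h h') + δ / 2) + 2 * Hr) := by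
              apply Finset.sum_le_sum
              intro h hh
              exact Finset.sum_le_sum fun h' hh' => hd h hh h' hh'
        _ = Nr * Tγ + Nr * (δ / 2) * Hr ^ 2 + 2 * Hr ^ 3 := by
              simp only [mul_add, Finset.sum_add_distrib, ← Finset.mul_sum, Finset.sum_const,
                card_range, nsmul_eq_mul, hTγ]
              push_cast [hHr]
              ring
      calc ‖W‖ ^ 2 ≤ (∑ n ∈ range N, ‖v n‖) ^ 2 := by
            apply pow_le_pow_left₀ (norm_nonneg _) hWn
      _ ≤ N * ∑ n ∈ range N, ‖v n‖ ^ 2 := hsq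
      _ ≤ Nr * (Nr * Tγ + Nr * (δ / 2) * Hr ^ 2 + 2 * Hr ^ 3) := by
            apply mul_le_mul_of_nonneg_left hsum2 hNrpos.le
    -- assemble
    set x : ℝ := ‖W‖ / (Nr * Hr) with hx
    have hx0 : 0 ≤ x := by positivity
    have hx1 : x ≤ 1 := by
      rw [hx, div_le_one (by positivity)]
      calc ‖W‖ ≤ ∑ n ∈ range N, ‖v n‖ := norm_sum_le _ _
      _ ≤ ∑ n ∈ range N, Hr := Finset.sum_le_sum fun n _ => hvb n
      _ = Nr * Hr := by rw [Finset.sum_const, card_range, nsmul_eq_mul]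
    have hx2 : x ^ 2 ≤ Hr⁻¹ ^ 2 * Tγ + δ / 2 + e := by
      rw [hx, div_pow]
      rw [div_le_iff₀ (by positivity)]
      calc ‖W‖ ^ 2 ≤ Nr * (Nr * Tγ + Nr * (δ / 2) * Hr ^ 2 + 2 * Hr ^ 3) := hW2
      _ = (Hr⁻¹ ^ 2 * Tγ + δ / 2 + e) * (Nr * Hr) ^ 2 := by
          rw [hedef]
          field_simp
    have hy : Nr⁻¹ * ‖A‖ ≤ x + e := by
      have h1 : Hr * ‖A‖ ≤ ‖W‖ + 2 * Hr ^ 2 := by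
        have := norm_sub_norm_le (Hr • A) W
        rw [norm_smul, Real.norm_eq_abs, abs_of_pos hHrpos] at this
        linarith [this.trans ha]
      have heq : Nr⁻¹ * ‖A‖ = (Hr * ‖A‖) / (Nr * Hr) := by field_simp
      have heq2 : x + e = (‖W‖ + 2 * Hr ^ 2) / (Nr * Hr) := by
        rw [hx, hedef]; field_simp
      rw [heq, heq2]
      gcongr
    have goal_eq : ‖(N : ℝ)⁻¹ • A‖ ^ 2 = (Nr⁻¹ * ‖A‖) ^ 2 := by
      rw [norm_smul, Real.norm_eq_abs, abs_of_pos (by positivity : (0:ℝ) < (N:ℝ)⁻¹)]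
    rw [goal_eq]
    have hfin : (Nr⁻¹ * ‖A‖) ^ 2 ≤ (x + e) ^ 2 := by
      apply pow_le_pow_left₀ (by positivity) hy
    calc (Nr⁻¹ * ‖A‖) ^ 2 ≤ (x + e) ^ 2 := hfin
    _ = x ^ 2 + e * (2 * x + e) := by ring
    _ ≤ (Hr⁻¹ ^ 2 * Tγ + δ / 2 + e) + e * (2 * 1 + 1) := by
        have : e * (2 * x + e) ≤ e * (2 * 1 + 1) := by
          apply mul_le_mul_of_nonneg_left _ he0
          linarith
        linarith
    _ ≤ Hr⁻¹ ^ 2 * Tγ + δ := by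
        have : e + e * 3 = 4 * e := by ring
        linarith
  -- choose a suitable H
  apply le_of_forall_pos_le_add
  intro ε hε
  have stepE : ∃ H : ℕ, 1 ≤ H ∧
      ((H : ℝ)⁻¹) ^ 2 * (2 * ∑ k ∈ range H, ∑ d ∈ range (k + 1), γ d) ≤ L + ε := by
    set S : ℕ → ℝ := fun k => ∑ d ∈ range k, γ d with hS
    have hS0 : ∀ k, 0 ≤ S k := fun k => Finset.sum_nonneg fun d _ => hγ0 d
    have hev : ∀ᶠ k in atTop, R k < L + ε / 4 := by
      apply eventually_lt_of_limsup_lt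
      · rw [← hLdef]; linarith
      · exact isBoundedUnder_of ⟨1, fun H => hR1 H⟩
    obtain ⟨K, hK⟩ := eventually_atTop.mp hev
    have hSk : ∀ k : ℕ, K ≤ k → 1 ≤ k → S k ≤ (L + ε / 4) * k := by
      intro k hk h1
      have hkpos : (0 : ℝ) < k := by exact_mod_cast h1
      have := hK k hk
      rw [hRdef k] at this
      have h2 : S k = k * R k := by
        rw [hRdef k]; field_simp [hS]; rfl
      rw [h2, hRdef k]
      calc (k : ℝ) * ((k : ℝ)⁻¹ * ∑ h ∈ range k, γ h) ≤ (k : ℝ) * (L + ε / 4) := by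
            apply mul_le_mul_of_nonneg_left (le_of_lt this) hkpos.le
      _ = (L + ε / 4) * k := by ring
    set M : ℕ := max K 1 with hM
    set C₀ : ℝ := ∑ k ∈ range M, S (k + 1) with hC₀
    have hC₀0 : 0 ≤ C₀ := Finset.sum_nonneg fun k _ => hS0 _
    have gauss : ∀ n : ℕ, ∑ k ∈ range n, ((k : ℝ) + 1) = n * (n + 1) / 2 := by
      intro n
      induction n with
      | zero => simp
      | succ m ih => rw [Finset.sum_range_succ, ih]; push_cast; ring
    obtain ⟨H₀, hH₀⟩ := exists_nat_ge ((2 * C₀ + 1 + ε / 4) * (4 / (3 * ε)))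
    set H : ℕ := max (max M 1) H₀ with hHdef
    have hH1 : 1 ≤ H := le_trans (le_max_right M 1) (le_max_left _ _)
    have hHM : M ≤ H := le_trans (le_max_left M 1) (le_max_left _ _)
    have hHr : (2 * C₀ + 1 + ε / 4) * (4 / (3 * ε)) ≤ H := by
      refine hH₀.trans ?_
      exact_mod_cast le_max_right (max M 1) H₀
    refine ⟨H, hH1, ?_⟩
    have hHpos : (0 : ℝ) < H := by exact_mod_cast hH1
    -- split the sum
    have hsplit : ∑ k ∈ range H, S (k + 1)
        = C₀ + ∑ k ∈ Ico M H, S (k + 1) := by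
      rw [hC₀, range_eq_Ico, ← Finset.sum_Ico_consecutive _ (Nat.zero_le M) hHM, range_eq_Ico]
    have htail : ∑ k ∈ Ico M H, S (k + 1) ≤ (L + ε / 4) * (H * (H + 1) / 2) := by
      calc ∑ k ∈ Ico M H, S (k + 1) ≤ ∑ k ∈ Ico M H, (L + ε / 4) * ((k : ℝ) + 1) := by
            apply Finset.sum_le_sum
            intro k hk
            rw [mem_Ico] at hk
            have : K ≤ k + 1 := le_trans (le_trans (le_max_left K 1) hk.1) (Nat.le_succ k)
            have h2 := hSk (k + 1) this (Nat.le_add_left 1 k)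
            push_cast at h2 ⊢
            linarith
      _ ≤ ∑ k ∈ range H, (L + ε / 4) * ((k : ℝ) + 1) := by
            apply Finset.sum_le_sum_of_subset_of_nonneg
            · rw [range_eq_Ico]; exact Finset.Ico_subset_Ico (Nat.zero_le M) le_rfl
            · intro k _ _
              positivity
      _ = (L + ε / 4) * (H * (H + 1) / 2) := by
            rw [← Finset.mul_sum, gauss]
    have main : ((H : ℝ)⁻¹) ^ 2 * (2 * ∑ k ∈ range H, S (k + 1))
        ≤ 2 * C₀ / H ^ 2 + (L + ε / 4) + (L + ε / 4) / H := by
      rw [hsplit]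
      have expand : ((H : ℝ)⁻¹) ^ 2 * (2 * (C₀ + (L + ε / 4) * (H * (H + 1) / 2)))
          = 2 * C₀ / H ^ 2 + (L + ε / 4) + (L + ε / 4) / H := by
        field_simp
        ring
      rw [← expand]
      apply mul_le_mul_of_nonneg_left _ (by positivity)
      nlinarith [htail]
    have final : 2 * C₀ / H ^ 2 + (L + ε / 4) / H ≤ 3 * ε / 4 := by
      have hH1' : (1 : ℝ) ≤ H := by exact_mod_cast hH1
      have h1 : (H : ℝ) ≤ H ^ 2 := by nlinarith
      have h2 : 2 * C₀ / H ^ 2 ≤ 2 * C₀ / H := by gcongr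
      have h3 : (L + ε / 4) / H ≤ (1 + ε / 4) / H := by
        gcongr
      have h4 : 2 * C₀ / H + (1 + ε / 4) / H ≤ 3 * ε / 4 := by
        rw [← add_div, div_le_iff₀ hHpos]
        have hε' : (0 : ℝ) < 3 * ε := by linarith
        have heq : (2 * C₀ + (1 + ε / 4))
            = 3 * ε / 4 * ((2 * C₀ + 1 + ε / 4) * (4 / (3 * ε))) := by
          field_simp
          ring
        calc 2 * C₀ + (1 + ε / 4)
            = 3 * ε / 4 * ((2 * C₀ + 1 + ε / 4) * (4 / (3 * ε))) := heq
        _ ≤ 3 * ε / 4 * H := mul_le_mul_of_nonneg_left hHr (by linarith)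
      linarith
    calc ((H : ℝ)⁻¹) ^ 2 * (2 * ∑ k ∈ range H, S (k + 1))
        ≤ 2 * C₀ / H ^ 2 + (L + ε / 4) + (L + ε / 4) / H := main
    _ ≤ (L + ε / 4) + 3 * ε / 4 := by linarith
    _ ≤ L + ε := by linarith
  obtain ⟨H, hH1, hHb⟩ := stepE
  calc limsup (fun N : ℕ => ‖(N : ℝ)⁻¹ • ∑ n ∈ range N, u n‖ ^ 2) atTop
      ≤ ((H : ℝ)⁻¹) ^ 2 * ∑ h ∈ range H, ∑ h' ∈ range H, γ (Nat.dist h h') := stepD H hH1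
  _ ≤ ((H : ℝ)⁻¹) ^ 2 * (2 * ∑ k ∈ range H, ∑ d ∈ range (k + 1), γ d) := by
      apply mul_le_mul_of_nonneg_left (vdc_gamma_sum γ hγ0 H) (by positivity)
  _ ≤ L + ε := hHb
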